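/- Let 0 < p ≤ 1, m, s < N, A ∈ R^{m×N}, and Δ : R^m → R^N. Suppose ||x - Δ(Ax)||_p^p ≤ C σ_s(x)_p^p for all x ∈ R^N and some constant C > 0. Then m ≥ C' p s ln(eN/s), where C' > 0 depends only on C. -/

import Mathlib

/-- The ℓp (quasi-)norm on ℝ^N: `(∑ |x ℓ|^p)^(1/p)`. -/
noncomputable def pnorm (p : ℝ) {N : ℕ} (x : Fin N → ℝ) : ℝ :=
  (∑ i, |x i| ^ p) ^ (1 / p)

/-- A vector is `s`-sparse if at most `s` of its coordinates are nonzero. -/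
def IsSparse (s : ℕ) {N : ℕ} (z : Fin N → ℝ) : Prop :=
  ∃ S : Finset (Fin N), S.card ≤ s ∧ ∀ i ∉ S, z i = 0

/-- The error of best `s`-term approximation of `x` in `ℓ_p`. -/
noncomputable def bestApprox (s : ℕ) (p : ℝ) {N : ℕ} (x : Fin N → ℝ) : ℝ :=
  sInf {r | ∃ z : Fin N → ℝ, IsSparse s z ∧ r = pnorm p (x - z)}

open Finset MeasureTheory

noncomputable def Phi (p : ℝ) {N : ℕ} (x : Fin N → ℝ) : ℝ := ∑ i, |x i| ^ p

section PhiLemmas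
variable {p : ℝ} {N : ℕ}

lemma phi_nonneg (x : Fin N → ℝ) : 0 ≤ Phi p x :=
  Finset.sum_nonneg fun i _ => Real.rpow_nonneg (abs_nonneg _) _

lemma phi_zero (hp : 0 < p) : Phi p (0 : Fin N → ℝ) = 0 := by
  simp [Phi, Real.zero_rpow hp.ne']

lemma eq_of_phi_le_zero (hp : 0 < p) {x y : Fin N → ℝ} (h : Phi p (x - y) ≤ 0) : x = y := by
  have h0 : Phi p (x - y) = 0 := le_antisymm h (phi_nonneg _)
  have := (Finset.sum_eq_zero_iff_of_nonneg
    (fun i _ => Real.rpow_nonneg (abs_nonneg _) _)).1 h0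
  funext i
  have hi := this i (Finset.mem_univ i)
  have : |(x - y) i| = 0 := by
    rcases (Real.rpow_eq_zero_iff_of_nonneg (abs_nonneg _)).1 hi with ⟨h1, _⟩
    exact h1
  have := abs_eq_zero.1 this
  have : x i - y i = 0 := this
  linarith
lemma rpow_add_le (hp : 0 < p) (hp1 : p ≤ 1) {a b : ℝ} (ha : 0 ≤ a) (hb : 0 ≤ b) :
    (a + b) ^ p ≤ a ^ p + b ^ p := by
  have h := NNReal.rpow_add_le_add_rpow a.toNNReal b.toNNReal hp.le hp1
  have h2 := NNReal.coe_le_coe.2 h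
  rw [NNReal.coe_add, ← Real.toNNReal_add ha hb] at h2
  rw [NNReal.coe_rpow, NNReal.coe_rpow, NNReal.coe_rpow] at h2
  rwa [Real.coe_toNNReal _ (add_nonneg ha hb), Real.coe_toNNReal _ ha,
    Real.coe_toNNReal _ hb] at h2

lemma phi_add_le (hp : 0 < p) (hp1 : p ≤ 1) (x y : Fin N → ℝ) :
    Phi p (x + y) ≤ Phi p x + Phi p y := by
  rw [Phi, Phi, Phi, ← Finset.sum_add_distrib]
  refine Finset.sum_le_sum fun i _ => ?_
  calc |(x + y) i| ^ p ≤ (|x i| + |y i|) ^ p :=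
        Real.rpow_le_rpow (abs_nonneg _) (abs_add_le _ _) hp.le
    _ ≤ |x i| ^ p + |y i| ^ p := rpow_add_le hp hp1 (abs_nonneg _) (abs_nonneg _)

lemma phi_neg (x : Fin N → ℝ) : Phi p (-x) = Phi p x := by
  simp [Phi]

lemma phi_sub_comm (x y : Fin N → ℝ) : Phi p (x - y) = Phi p (y - x) := by
  rw [← phi_neg (y - x)]; congr 1; abel

lemma phi_sub_le (hp : 0 < p) (hp1 : p ≤ 1) (x y : Fin N → ℝ) :
    Phi p x - Phi p y ≤ Phi p (x - y) := by
  have := phi_add_le hp hp1 (x - y) y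
  simp only [sub_add_cancel] at this
  linarith

lemma phi_smul (hp : 0 < p) {c : ℝ} (hc : 0 ≤ c) (x : Fin N → ℝ) :
    Phi p (c • x) = c ^ p * Phi p x := by
  rw [Phi, Phi, Finset.mul_sum]
  refine Finset.sum_congr rfl fun i _ => ?_
  rw [Pi.smul_apply, smul_eq_mul, abs_mul, abs_of_nonneg hc,
    Real.mul_rpow hc (abs_nonneg _)]

end PhiLemmas

section Best
variable {p : ℝ} {N s : ℕ}

lemma pnorm_nonneg (x : Fin N → ℝ) : 0 ≤ pnorm p x :=
  Real.rpow_nonneg (phi_nonneg x) _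

lemma pnorm_rpow (hp : 0 < p) (x : Fin N → ℝ) : pnorm p x ^ p = Phi p x := by
  have ha : (0:ℝ) ≤ ∑ i, |x i| ^ p := phi_nonneg x
  rw [pnorm, ← Real.rpow_mul ha, one_div, inv_mul_cancel₀ hp.ne', Real.rpow_one]
  rfl

lemma isSparse_zero : IsSparse s (0 : Fin N → ℝ) := ⟨∅, by simp, by simp⟩

lemma bestApprox_nonneg (x : Fin N → ℝ) : 0 ≤ bestApprox s p x := by
  refine le_csInf ⟨pnorm p (x - 0), ⟨0, isSparse_zero, rfl⟩⟩ ?_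
  rintro r ⟨z, _, rfl⟩; exact pnorm_nonneg _

lemma bestApprox_le {z : Fin N → ℝ} (hz : IsSparse s z) (x : Fin N → ℝ) :
    bestApprox s p x ≤ pnorm p (x - z) := by
  refine csInf_le ⟨0, ?_⟩ ⟨z, hz, rfl⟩
  rintro r ⟨w, _, rfl⟩; exact pnorm_nonneg _

end Best

section Recovery
variable {p C : ℝ} {N m s : ℕ}
variable {A : Matrix (Fin m) (Fin N) ℝ} {Δ : (Fin m → ℝ) → (Fin N → ℝ)}

/-- Stability in `Φ` form. -/
lemma stab (hp : 0 < p) (hC : 0 < C)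
    (hyp : ∀ x : Fin N → ℝ,
      pnorm p (x - Δ (Matrix.mulVec A x)) ^ p ≤ C * bestApprox s p x ^ p)
    (x : Fin N → ℝ) {z : Fin N → ℝ} (hz : IsSparse s z) :
    Phi p (x - Δ (Matrix.mulVec A x)) ≤ C * Phi p (x - z) := by
  have h1 := hyp x
  rw [pnorm_rpow hp] at h1
  refine h1.trans (mul_le_mul_of_nonneg_left ?_ hC.le)
  rw [← pnorm_rpow hp]
  exact Real.rpow_le_rpow (bestApprox_nonneg x) (bestApprox_le hz x) hp.le

/-- Exact recovery of sparse vectors. -/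
lemma exact_recovery (hp : 0 < p) (hC : 0 < C)
    (hyp : ∀ x : Fin N → ℝ,
      pnorm p (x - Δ (Matrix.mulVec A x)) ^ p ≤ C * bestApprox s p x ^ p)
    {z : Fin N → ℝ} (hz : IsSparse s z) :
    Δ (Matrix.mulVec A z) = z := by
  have h := stab hp hC hyp z hz
  simp only [sub_self] at h
  rw [phi_zero hp, mul_zero] at h
  exact (eq_of_phi_le_zero hp h).symm

/-- `m ≥ s` from exact recovery. -/
lemma s_le_m (hp : 0 < p) (hC : 0 < C) (hsN : s < N)
    (hyp : ∀ x : Fin N → ℝ,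
      pnorm p (x - Δ (Matrix.mulVec A x)) ^ p ≤ C * bestApprox s p x ^ p) :
    s ≤ m := by
  classical
  let E : (Fin s → ℝ) →ₗ[ℝ] (Fin N → ℝ) :=
    { toFun := fun v i => if h : (i : ℕ) < s then v ⟨i.1, h⟩ else 0
      map_add' := by intro v w; funext i; by_cases h : (i : ℕ) < s <;> simp [h]
      map_smul' := by intro c v; funext i; by_cases h : (i : ℕ) < s <;> simp [h] }
  have hEsp : ∀ v : Fin s → ℝ, IsSparse s (E v) := by
    intro v
    refine ⟨(univ : Finset (Fin s)).image
      (fun j => (⟨j.1, j.2.trans hsN⟩ : Fin N)), ?_, ?_⟩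
    · exact (Finset.card_image_le).trans (by simp)
    · intro i hi
      have : ¬ (i : ℕ) < s := by
        intro h
        exact hi (Finset.mem_image.2 ⟨⟨i.1, h⟩, Finset.mem_univ _, rfl⟩)
      simp only [E, LinearMap.coe_mk, AddHom.coe_mk]
      rw [dif_neg this]
  let g : (Fin s → ℝ) →ₗ[ℝ] (Fin m → ℝ) := (Matrix.mulVecLin A) ∘ₗ E
  have hg0 : ∀ v, g v = 0 → v = 0 := by
    intro v hv
    have h1 : Matrix.mulVec A (E v) = 0 := hv
    have h2 : Δ (Matrix.mulVec A (E v)) = E v := exact_recovery hp hC hyp (hEsp v)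
    have h3 : Δ (Matrix.mulVec A (0 : Fin N → ℝ)) = 0 :=
      exact_recovery hp hC hyp isSparse_zero
    have h4 : E v = (0 : Fin N → ℝ) := by
      rw [← h2, h1, ← h3]; congr 1; simp [Matrix.mulVec_zero]
    funext j
    have := congrFun h4 ⟨j.1, j.2.trans hsN⟩
    simpa [E] using this
  have hginj : Function.Injective g := by
    intro x y hxy
    have : g (x - y) = 0 := by rw [map_sub, hxy, sub_self]
    exact sub_eq_zero.1 (hg0 _ this)
  have := LinearMap.finrank_le_finrank_of_injective hginj
  simpa [Module.finrank_fin_fun] using this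

end Recovery

section Indicator
variable {p : ℝ} {N : ℕ}

noncomputable def indVec {N : ℕ} (T : Finset (Fin N)) : Fin N → ℝ :=
  fun i => if i ∈ T then 1 else 0

lemma phi_indVec (hp : 0 < p) (T : Finset (Fin N)) :
    Phi p (indVec T) = T.card := by
  classical
  rw [Phi]
  have : ∀ i, |indVec T i| ^ p = if i ∈ T then (1:ℝ) else 0 := by
    intro i
    by_cases h : i ∈ T <;> simp [indVec, h, Real.zero_rpow hp.ne']
  rw [Finset.sum_congr rfl fun i _ => this i]
  simp

lemma indVec_sparse {s : ℕ} {T : Finset (Fin N)} (h : T.card ≤ s) :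
    IsSparse s (indVec T) :=
  ⟨T, h, fun i hi => by simp [indVec, hi]⟩

lemma phi_indVec_sub (hp : 0 < p) (T T' : Finset (Fin N)) :
    Phi p (indVec T - indVec T') = ((T \ T').card + (T' \ T).card : ℕ) := by
  classical
  rw [Phi]
  have : ∀ i, |(indVec T - indVec T') i| ^ p
      = if i ∈ (T \ T') ∪ (T' \ T) then (1:ℝ) else 0 := by
    intro i
    by_cases h1 : i ∈ T <;> by_cases h2 : i ∈ T' <;>
      simp [indVec, h1, h2, Real.zero_rpow hp.ne']
  rw [Finset.sum_congr rfl fun i _ => this i]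
  rw [Finset.sum_ite_mem, Finset.univ_inter, Finset.sum_const, Finset.card_union_of_disjoint]
  · simp
  · exact disjoint_sdiff_sdiff

end Indicator

section Sep
variable {p C : ℝ} {N m s : ℕ}
variable {A : Matrix (Fin m) (Fin N) ℝ} {Δ : (Fin m → ℝ) → (Fin N → ℝ)}

lemma separation (hp : 0 < p) (hp1 : p ≤ 1) (hC : 0 < C)
    (hyp : ∀ x : Fin N → ℝ,
      pnorm p (x - Δ (Matrix.mulVec A x)) ^ p ≤ C * bestApprox s p x ^ p)
    {T T' : Finset (Fin N)} (hT : T.card = s) (hT' : T'.card = s)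
    (hint : 2 * (T ∩ T').card < s) (a b : Fin N → ℝ)
    (ha : Phi p a ≤ s / (3 * (C + 1))) (hb : Phi p b ≤ s / (3 * (C + 1))) :
    Matrix.mulVec A (indVec T + a) ≠ Matrix.mulVec A (indVec T' + b) := by
  intro heq
  set ρ : ℝ := s / (3 * (C + 1)) with hρdef
  set w : Fin N → ℝ := indVec T' + (b - a) with hw
  have hAw : Matrix.mulVec A w = Matrix.mulVec A (indVec T) := by
    have h1 : w = (indVec T' + b) - a := by rw [hw]; abel
    rw [h1, Matrix.mulVec_sub, ← heq, Matrix.mulVec_add]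
    abel
  have hrec : Δ (Matrix.mulVec A w) = indVec T := by
    rw [hAw]; exact exact_recovery hp hC hyp (indVec_sparse hT.le)
  have hub : Phi p (w - indVec T) ≤ C * (2 * ρ) := by
    have := stab hp hC hyp w (indVec_sparse hT'.le)
    rw [hrec] at this
    refine this.trans (mul_le_mul_of_nonneg_left ?_ hC.le)
    have h2 : w - indVec T' = b - a := by rw [hw]; abel
    rw [h2]
    have := phi_add_le hp hp1 b (-a)
    rw [phi_neg] at this
    calc Phi p (b - a) = Phi p (b + -a) := by rw [sub_eq_add_neg]
      _ ≤ Phi p b + Phi p a := this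
      _ ≤ 2 * ρ := by linarith
  have hcs : (0:ℝ) < s := by
    have : 2 * (T ∩ T').card < s := hint
    have := Nat.pos_of_ne_zero (by omega : s ≠ 0)
    exact_mod_cast this
  have hlb : (s : ℝ) - 2 * ρ < Phi p (w - indVec T) := by
    have hdiff : w - indVec T = (indVec T' - indVec T) + (b - a) := by rw [hw]; abel
    have htri : Phi p (indVec T' - indVec T)
        ≤ Phi p (w - indVec T) + Phi p (b - a) := by
      have := phi_add_le hp hp1 (w - indVec T) (-(b - a))
      have h3 : (w - indVec T) + -(b - a) = indVec T' - indVec T := by rw [hw]; abel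
      rw [h3, phi_neg] at this
      exact this
    have hba : Phi p (b - a) ≤ 2 * ρ := by
      have := phi_add_le hp hp1 b (-a)
      rw [phi_neg] at this
      calc Phi p (b - a) = Phi p (b + -a) := by rw [sub_eq_add_neg]
        _ ≤ Phi p b + Phi p a := this
        _ ≤ 2 * ρ := by linarith
    have hd : (s:ℝ) < Phi p (indVec T' - indVec T) := by
      rw [phi_indVec_sub hp]
      have e1 : (T' \ T).card + (T ∩ T').card = s := by
        rw [Finset.inter_comm]
        rw [Finset.card_sdiff_add_card_inter]; exact hT'
      have e2 : (T \ T').card + (T ∩ T').card = s := by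
        rw [Finset.card_sdiff_add_card_inter]; exact hT
      have : (T' \ T).card + (T \ T').card = 2 * s - 2 * (T ∩ T').card := by omega
      rw [this]
      have h4 : s < 2 * s - 2 * (T ∩ T').card := by omega
      exact_mod_cast h4
    linarith
  have hρpos : 0 < ρ := by
    rw [hρdef]; positivity
  have hC1 : C + 1 ≠ 0 := by positivity
  have hkey : ρ * (C + 1) = s / 3 := by
    rw [hρdef]; field_simp
  nlinarith

section Packing
variable {N s k : ℕ}

lemma super_count (hks : k ≤ s) {S : Finset (Fin N)} (hS : S.card = k) :
    (((powersetCard s (univ : Finset (Fin N)))).filter (fun T' => S ⊆ T')).card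
      ≤ (N - k).choose (s - k) := by
  classical
  have h : (((powersetCard s (univ : Finset (Fin N)))).filter (fun T' => S ⊆ T')).card
      ≤ (powersetCard (s - k) ((univ : Finset (Fin N)) \ S)).card := by
    refine Finset.card_le_card_of_injOn (fun T' => T' \ S) ?_ ?_
    · intro T' hT'
      simp only [Finset.mem_coe, Finset.mem_filter, Finset.mem_powersetCard] at hT'
      obtain ⟨⟨_, hcard⟩, hsub⟩ := hT'
      rw [Finset.mem_coe, Finset.mem_powersetCard]
      refine ⟨Finset.sdiff_subset_sdiff (Finset.subset_univ _) (le_refl _), ?_⟩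
      rw [Finset.card_sdiff_of_subset hsub, hcard, hS]
    · intro T1 h1 T2 h2 heq
      simp only [Finset.mem_coe, Finset.mem_filter, Finset.mem_powersetCard] at h1 h2
      have e1 : T1 \ S ∪ S = T1 := Finset.sdiff_union_of_subset h1.2
      have e2 : T2 \ S ∪ S = T2 := Finset.sdiff_union_of_subset h2.2
      rw [← e1, ← e2]
      simp only at heq
      rw [heq]
  calc _ ≤ (powersetCard (s - k) ((univ : Finset (Fin N)) \ S)).card := h
    _ = (N - k).choose (s - k) := by
      rw [Finset.card_powersetCard, Finset.card_sdiff_of_subset (Finset.subset_univ S),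
        Finset.card_univ, Fintype.card_fin, hS]

lemma bad_count (hks : k ≤ s) {T₀ : Finset (Fin N)} (hT₀ : T₀.card = s) :
    (((powersetCard s (univ : Finset (Fin N)))).filter
        (fun T' => k ≤ (T₀ ∩ T').card)).card
      ≤ s.choose k * (N - k).choose (s - k) := by
  classical
  have hsub : ((powersetCard s (univ : Finset (Fin N)))).filter
        (fun T' => k ≤ (T₀ ∩ T').card)
      ⊆ (powersetCard k T₀).biUnion
          (fun S => ((powersetCard s (univ : Finset (Fin N)))).filter (fun T' => S ⊆ T')) := by
    intro T' hT'
    simp only [Finset.mem_filter] at hT'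
    obtain ⟨hmem, hk⟩ := hT'
    obtain ⟨S, hSsub, hScard⟩ := Finset.exists_subset_card_eq hk
    refine Finset.mem_biUnion.2 ⟨S, ?_, ?_⟩
    · exact Finset.mem_powersetCard.2 ⟨hSsub.trans Finset.inter_subset_left, hScard⟩
    · exact Finset.mem_filter.2 ⟨hmem, hSsub.trans Finset.inter_subset_right⟩
  calc _ ≤ ((powersetCard k T₀).biUnion
          (fun S => ((powersetCard s (univ : Finset (Fin N)))).filter (fun T' => S ⊆ T'))).card :=
        Finset.card_le_card hsub
    _ ≤ ∑ S ∈ powersetCard k T₀,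
          (((powersetCard s (univ : Finset (Fin N)))).filter (fun T' => S ⊆ T')).card :=
        Finset.card_biUnion_le
    _ ≤ ∑ S ∈ powersetCard k T₀, (N - k).choose (s - k) := by
        refine Finset.sum_le_sum fun S hS => ?_
        exact super_count hks (Finset.mem_powersetCard.1 hS).2
    _ = s.choose k * (N - k).choose (s - k) := by
        rw [Finset.sum_const, Finset.card_powersetCard, hT₀, smul_eq_mul]

lemma packing (hs : 0 < s) (hsN : s ≤ N) (hks : k ≤ s) :
    ∃ F : Finset (Finset (Fin N)), (∀ T ∈ F, T.card = s) ∧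
      (∀ T ∈ F, ∀ T' ∈ F, T ≠ T' → (T ∩ T').card < k) ∧
      N.choose s ≤ F.card * (s.choose k * (N - k).choose (s - k)) := by
  classical
  set good : Finset (Finset (Fin N)) → Prop := fun F =>
    F ⊆ powersetCard s (univ : Finset (Fin N)) ∧
    ∀ T ∈ F, ∀ T' ∈ F, T ≠ T' → (T ∩ T').card < k with hgood
  have hne : ((powersetCard s (univ : Finset (Fin N))).powerset.filter good).Nonempty := by
    refine ⟨∅, Finset.mem_filter.2 ⟨Finset.mem_powerset.2 (Finset.empty_subset _), ?_⟩⟩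
    exact ⟨Finset.empty_subset _, by simp⟩
  obtain ⟨F, hFmem, hFmax⟩ := Finset.exists_max_image _ Finset.card hne
  have hFgood : good F := (Finset.mem_filter.1 hFmem).2
  have hcards : ∀ T ∈ F, T.card = s := fun T hT =>
    (Finset.mem_powersetCard.1 (hFgood.1 hT)).2
  refine ⟨F, hcards, hFgood.2, ?_⟩
  -- covering property
  have hcover : ∀ T' ∈ powersetCard s (univ : Finset (Fin N)),
      ∃ T ∈ F, k ≤ (T ∩ T').card := by
    intro T' hT'
    by_contra hcon
    push_neg at hcon
    have hT'notin : T' ∉ F := by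
      intro hin
      have := hcon T' hin
      rw [Finset.inter_self] at this
      have := (Finset.mem_powersetCard.1 hT').2
      omega
    have hgood' : good (insert T' F) := by
      constructor
      · intro X hX
        rcases Finset.mem_insert.1 hX with h | h
        · rwa [h]
        · exact hFgood.1 h
      · intro X hX Y hY hXY
        rcases Finset.mem_insert.1 hX with h1 | h1 <;>
          rcases Finset.mem_insert.1 hY with h2 | h2
        · exact absurd (h1.trans h2.symm) hXY
        · subst h1
          rw [Finset.inter_comm]
          exact hcon Y h2
        · subst h2
          exact hcon X h1
        · exact hFgood.2 X h1 Y h2 hXY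
    have hmem' : insert T' F ∈
        (powersetCard s (univ : Finset (Fin N))).powerset.filter good :=
      Finset.mem_filter.2 ⟨Finset.mem_powerset.2 hgood'.1, hgood'⟩
    have := hFmax _ hmem'
    rw [Finset.card_insert_of_notMem hT'notin] at this
    omega
  -- counting
  have hsubset : powersetCard s (univ : Finset (Fin N)) ⊆
      F.biUnion (fun T => ((powersetCard s (univ : Finset (Fin N)))).filter
        (fun T' => k ≤ (T ∩ T').card)) := by
    intro T' hT'
    obtain ⟨T, hTF, hk⟩ := hcover T' hT'
    exact Finset.mem_biUnion.2 ⟨T, hTF, Finset.mem_filter.2 ⟨hT', hk⟩⟩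
  calc N.choose s = (powersetCard s (univ : Finset (Fin N))).card := by
        rw [Finset.card_powersetCard, Finset.card_univ, Fintype.card_fin]
    _ ≤ (F.biUnion (fun T => ((powersetCard s (univ : Finset (Fin N)))).filter
          (fun T' => k ≤ (T ∩ T').card))).card := Finset.card_le_card hsubset
    _ ≤ ∑ T ∈ F, (((powersetCard s (univ : Finset (Fin N)))).filter
          (fun T' => k ≤ (T ∩ T').card)).card := Finset.card_biUnion_le
    _ ≤ ∑ T ∈ F, s.choose k * (N - k).choose (s - k) :=
        Finset.sum_le_sum fun T hT => bad_count hks (hcards T hT)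
    _ = F.card * (s.choose k * (N - k).choose (s - k)) := by
        rw [Finset.sum_const, smul_eq_mul]

end Packing

lemma choose_ratio_aux : ∀ (k s' N' : ℕ), s' ≤ N' →
    (((N' + k : ℕ) : ℝ) / ((s' + k : ℕ) : ℝ)) ^ k * (N'.choose s' : ℝ)
      ≤ ((N' + k).choose (s' + k) : ℝ) := by
  intro k
  induction k with
  | zero => intro s' N' h; simp
  | succ k ih =>
    intro s' N' h
    have key : ((N' + k + 1 : ℕ) : ℝ) * ((N' + k).choose (s' + k) : ℝ)
        = ((s' + k + 1 : ℕ) : ℝ) * (((N' + k + 1).choose (s' + k + 1) : ℕ) : ℝ) := by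
      have := Nat.add_one_mul_choose_eq (N' + k) (s' + k)
      have h2 : (Nat.succ (N' + k) * Nat.choose (N' + k) (s' + k) : ℕ)
          = (Nat.choose (Nat.succ (N' + k)) (Nat.succ (s' + k)) * Nat.succ (s' + k) : ℕ) := this
      have h3 : ((N' + k + 1) * (N' + k).choose (s' + k) : ℕ)
          = ((s' + k + 1) * (N' + k + 1).choose (s' + k + 1) : ℕ) := by
        simpa [Nat.succ_eq_add_one, mul_comm] using h2
      exact_mod_cast h3
    have hd : (0:ℝ) < ((s' + k + 1 : ℕ) : ℝ) := by positivity
    have hbase : (0:ℝ) ≤ ((N' + k + 1 : ℕ) : ℝ) / ((s' + k + 1 : ℕ) : ℝ) := by positivity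
    have hpow : (((N' + k + 1 : ℕ) : ℝ) / ((s' + k + 1 : ℕ) : ℝ)) ^ k
        ≤ (((N' + k : ℕ) : ℝ) / ((s' + k : ℕ) : ℝ)) ^ k := by
      rcases Nat.eq_zero_or_pos k with hk | hk
      · simp [hk]
      · apply pow_le_pow_left₀ hbase
        rw [div_le_div_iff₀ (by positivity) (by exact_mod_cast Nat.add_pos_right s' hk)]
        push_cast
        nlinarith [(Nat.cast_le (α := ℝ)).2 h]
    have step1 : (((N' + (k+1) : ℕ) : ℝ) / ((s' + (k+1) : ℕ) : ℝ)) ^ (k+1) * (N'.choose s' : ℝ)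
        ≤ (((N' + k + 1 : ℕ) : ℝ) / ((s' + k + 1 : ℕ) : ℝ))
            * ((((N' + k : ℕ) : ℝ) / ((s' + k : ℕ) : ℝ)) ^ k * (N'.choose s' : ℝ)) := by
      have : (N' + (k+1) : ℕ) = (N' + k + 1 : ℕ) := by omega
      rw [this]
      have : (s' + (k+1) : ℕ) = (s' + k + 1 : ℕ) := by omega
      rw [this]
      rw [pow_succ]
      have hc : (0:ℝ) ≤ (N'.choose s' : ℝ) := by positivity
      calc (((N' + k + 1:ℕ):ℝ) / ((s' + k + 1:ℕ):ℝ)) ^ k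
            * (((N' + k + 1:ℕ):ℝ) / ((s' + k + 1:ℕ):ℝ)) * (N'.choose s' : ℝ)
          ≤ (((N' + k:ℕ):ℝ) / ((s' + k:ℕ):ℝ)) ^ k
            * (((N' + k + 1:ℕ):ℝ) / ((s' + k + 1:ℕ):ℝ)) * (N'.choose s' : ℝ) := by
            apply mul_le_mul_of_nonneg_right (mul_le_mul_of_nonneg_right hpow hbase) hc
        _ = (((N' + k + 1:ℕ):ℝ) / ((s' + k + 1:ℕ):ℝ))
            * ((((N' + k:ℕ):ℝ) / ((s' + k:ℕ):ℝ)) ^ k * (N'.choose s' : ℝ)) := by ring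
    have step2 : (((N' + k + 1 : ℕ) : ℝ) / ((s' + k + 1 : ℕ) : ℝ))
            * ((((N' + k : ℕ) : ℝ) / ((s' + k : ℕ) : ℝ)) ^ k * (N'.choose s' : ℝ))
        ≤ (((N' + k + 1 : ℕ) : ℝ) / ((s' + k + 1 : ℕ) : ℝ)) * ((N' + k).choose (s' + k) : ℝ) :=
      mul_le_mul_of_nonneg_left (ih s' N' h) hbase
    have step3 : (((N' + k + 1 : ℕ) : ℝ) / ((s' + k + 1 : ℕ) : ℝ)) * ((N' + k).choose (s' + k) : ℝ)
        = (((N' + k + 1).choose (s' + k + 1) : ℕ) : ℝ) := by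
      rw [div_mul_eq_mul_div, key]
      field_simp
    have hfin : (N' + (k+1)).choose (s' + (k+1)) = (N' + k + 1).choose (s' + k + 1) := by
      congr 1 <;> omega
    rw [hfin]
    calc _ ≤ _ := step1
      _ ≤ _ := step2
      _ = _ := step3

lemma packing_strong {N s : ℕ} (hs : 0 < s) (hsN : s ≤ N) :
    ∃ F : Finset (Finset (Fin N)), (∀ T ∈ F, T.card = s) ∧
      (∀ T ∈ F, ∀ T' ∈ F, T ≠ T' → 2 * (T ∩ T').card < s) ∧
      ((N : ℝ) / (4 * s)) ^ ((s+1)/2 : ℕ) ≤ F.card := by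
  classical
  set k : ℕ := (s+1)/2 with hk
  have hks : k ≤ s := by omega
  have hs2k : s ≤ 2 * k := by omega
  obtain ⟨F, hFcard, hFint, hFcount⟩ := packing hs hsN hks
  refine ⟨F, hFcard, ?_, ?_⟩
  · intro T hT T' hT' hne
    have := hFint T hT T' hT' hne
    omega
  · -- ratio bound
    have hNk : N - k + k = N := by omega
    have hsk : s - k + k = s := by omega
    have hratio : (((N:ℕ):ℝ) / ((s:ℕ):ℝ)) ^ k * (((N-k).choose (s-k) : ℕ) : ℝ)
        ≤ ((N.choose s : ℕ) : ℝ) := by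
      have := choose_ratio_aux k (s - k) (N - k) (by omega)
      rwa [hNk, hsk] at this
    have hcpos : (0:ℝ) < (((N-k).choose (s-k) : ℕ) : ℝ) := by
      exact_mod_cast Nat.choose_pos (by omega : s - k ≤ N - k)
    have hcount : ((N.choose s : ℕ) : ℝ)
        ≤ (F.card : ℝ) * ((s.choose k : ℕ) : ℝ) * (((N-k).choose (s-k) : ℕ) : ℝ) := by
      have := hFcount
      have h2 : ((N.choose s : ℕ) : ℝ)
          ≤ ((F.card * (s.choose k * (N - k).choose (s - k)) : ℕ) : ℝ) := by
        exact_mod_cast this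
      push_cast at h2
      linarith
    have h3 : (((N:ℕ):ℝ) / ((s:ℕ):ℝ)) ^ k ≤ (F.card : ℝ) * ((s.choose k : ℕ) : ℝ) := by
      have := hratio.trans hcount
      exact le_of_mul_le_mul_right (by linarith) hcpos
    have hchoose4 : ((s.choose k : ℕ) : ℝ) ≤ (4:ℝ) ^ k := by
      have h1 : s.choose k ≤ 2 ^ s := by
        calc s.choose k ≤ ∑ m ∈ Finset.range (s+1), s.choose m :=
              Finset.single_le_sum (fun m _ => Nat.zero_le _)
                (Finset.mem_range.2 (by omega))
          _ = 2 ^ s := Nat.sum_range_choose s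
      have h2 : (2:ℕ) ^ s ≤ 2 ^ (2 * k) := Nat.pow_le_pow_right (by norm_num) hs2k
      have : ((s.choose k : ℕ) : ℝ) ≤ ((2 ^ (2*k) : ℕ) : ℝ) := by
        exact_mod_cast h1.trans h2
      calc ((s.choose k : ℕ) : ℝ) ≤ ((2 ^ (2*k) : ℕ) : ℝ) := this
        _ = (4:ℝ) ^ k := by
          push_cast
          rw [pow_mul]
          norm_num
    have h4pos : (0:ℝ) < (4:ℝ) ^ k := by positivity
    have hspos : (0:ℝ) < (s:ℝ) := by exact_mod_cast hs
    have hfinal : ((N : ℝ) / (s:ℝ)) ^ k ≤ (F.card : ℝ) * (4:ℝ) ^ k := by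
      refine h3.trans ?_
      exact mul_le_mul_of_nonneg_left hchoose4 (by positivity)
    have : ((N : ℝ) / (4 * s)) ^ k = ((N : ℝ) / (s:ℝ)) ^ k / (4:ℝ)^k := by
      rw [← div_pow]
      congr 1
      rw [div_div, mul_comm]
    rw [this, div_le_iff₀ h4pos]
    linarith

section Volume
open scoped Pointwise ENNReal

lemma card_le_of_separated {p : ℝ} (hp : 0 < p) {N r : ℕ}
    (B : (Fin N → ℝ) →ₗ[ℝ] (Fin r → ℝ)) (hBsurj : Function.Surjective B)
    {ι : Type*} (F : Finset ι) (u : ι → (Fin N → ℝ))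
    {R ρ : ℝ} (hR : 0 ≤ R) (hρ : 0 < ρ)
    (hu : ∀ i ∈ F, Phi p (u i) ≤ R)
    (hadd : ∀ x y : Fin N → ℝ, Phi p (x + y) ≤ Phi p x + Phi p y)
    (hsep : ∀ i ∈ F, ∀ j ∈ F, i ≠ j → ∀ a b : Fin N → ℝ,
        Phi p a ≤ ρ → Phi p b ≤ ρ → B (u i + a) ≠ B (u j + b)) :
    (F.card : ℝ) ≤ ((R + ρ) / ρ) ^ ((r : ℝ) / p) := by
  classical
  set μ : Measure (Fin r → ℝ) := volume with hμ
  set Q : ℝ → Set (Fin N → ℝ) := fun t => {x | Phi p x ≤ t} with hQ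
  have hPhiCont : Continuous (fun x : Fin N → ℝ => Phi p x) := by
    apply continuous_finset_sum
    intro i _
    exact (continuous_apply i).abs.rpow_const (fun x => Or.inr hp.le)
  have hQcl : ∀ t, IsClosed (Q t) := fun t => isClosed_le hPhiCont continuous_const
  have hQbd : ∀ t, Bornology.IsBounded (Q t) := by
    intro t
    refine isBounded_iff_forall_norm_le.2 ⟨t ^ (1/p), fun x hx => ?_⟩
    have hxt : Phi p x ≤ t := hx
    have htnn : 0 ≤ t := le_trans (phi_nonneg x) hxt
    refine (pi_norm_le_iff_of_nonneg (Real.rpow_nonneg htnn _)).2 fun i => ?_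
    have h1 : |x i| ^ p ≤ t := by
      refine le_trans ?_ hxt
      exact Finset.single_le_sum (fun j _ => Real.rpow_nonneg (abs_nonneg _) _)
        (Finset.mem_univ i)
    have := Real.rpow_le_rpow (Real.rpow_nonneg (abs_nonneg (x i)) p) h1
      (le_of_lt (by positivity : (0:ℝ) < 1/p))
    rw [one_div, Real.rpow_rpow_inv (abs_nonneg _) hp.ne', ← one_div] at this
    rwa [Real.norm_eq_abs]
  have hQcp : ∀ t, IsCompact (Q t) :=
    fun t => Metric.isCompact_of_isClosed_isBounded (hQcl t) (hQbd t)
  have hBcont : Continuous B := B.continuous_of_finiteDimensional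
  set K : ℝ → Set (Fin r → ℝ) := fun t => B '' Q t with hK
  have hKcp : ∀ t, IsCompact (K t) := fun t => (hQcp t).image hBcont
  -- scaling
  have hQsmul : ∀ t : ℝ, 0 < t → Q t = (t ^ (1/p)) • Q 1 := by
    intro t ht
    have hc : (0:ℝ) < t ^ (1/p) := Real.rpow_pos_of_pos ht _
    have hcp : (t ^ (1/p)) ^ p = t := by
      rw [one_div, Real.rpow_inv_rpow ht.le hp.ne']
    ext x
    constructor
    · intro hx
      have hxt : Phi p x ≤ t := hx
      refine ⟨(t ^ (1/p))⁻¹ • x, ?_, smul_inv_smul₀ hc.ne' x⟩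
      have heq : Phi p ((t ^ (1/p))⁻¹ • x) = ((t ^ (1/p))⁻¹) ^ p * Phi p x :=
        phi_smul hp (by positivity) x
      have hip : ((t ^ (1/p))⁻¹) ^ p = t⁻¹ := by
        rw [Real.inv_rpow hc.le, hcp]
      rw [hQ]; simp only [Set.mem_setOf_eq]
      rw [heq, hip]
      calc t⁻¹ * Phi p x ≤ t⁻¹ * t :=
            mul_le_mul_of_nonneg_left hxt (inv_nonneg.2 ht.le)
        _ = 1 := inv_mul_cancel₀ ht.ne'
    · rintro ⟨y, hy, rfl⟩
      have heq : Phi p ((t ^ (1/p)) • y) = (t ^ (1/p)) ^ p * Phi p y :=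
        phi_smul hp hc.le y
      have hy1 : Phi p y ≤ 1 := hy
      rw [hQ]; simp only [Set.mem_setOf_eq]
      rw [heq, hcp]
      calc t * Phi p y ≤ t * 1 := mul_le_mul_of_nonneg_left hy1 ht.le
        _ = t := mul_one t
  have hKsmul : ∀ t : ℝ, 0 < t → K t = (t ^ (1/p)) • K 1 := by
    intro t ht
    rw [hK]
    simp only
    rw [hQsmul t ht]
    ext z
    constructor
    · rintro ⟨x, ⟨y, hy, rfl⟩, rfl⟩
      exact ⟨B y, ⟨y, hy, rfl⟩, (map_smul B _ y).symm⟩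
    · rintro ⟨w, ⟨y, hy, rfl⟩, rfl⟩
      exact ⟨(t ^ (1/p)) • y, ⟨y, hy, rfl⟩, map_smul B _ y⟩
  have hfr : Module.finrank ℝ (Fin r → ℝ) = r := Module.finrank_fin_fun ℝ
  have hμK : ∀ t : ℝ, 0 < t →
      μ (K t) = ENNReal.ofReal ((t ^ (1/p)) ^ (r : ℕ)) * μ (K 1) := by
    intro t ht
    rw [hKsmul t ht, hμ, Measure.addHaar_smul, hfr,
      abs_of_nonneg (by positivity : (0:ℝ) ≤ (t ^ (1/p)) ^ (r:ℕ))]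
  -- positivity of μ (K 1)
  have hK1pos : 0 < μ (K 1) := by
    set ε : ℝ := (((N:ℝ) + 1)⁻¹) ^ (1/p) with hε
    have hεpos : 0 < ε := Real.rpow_pos_of_pos (by positivity) _
    have hball : Metric.ball (0 : Fin N → ℝ) ε ⊆ Q 1 := by
      intro x hx
      rw [Metric.mem_ball, dist_zero_right] at hx
      rw [hQ]; simp only [Set.mem_setOf_eq]
      have hεp : ε ^ p = ((N:ℝ) + 1)⁻¹ := by
        rw [hε, one_div, Real.rpow_inv_rpow (by positivity) hp.ne']
      have : ∀ i, |x i| ^ p ≤ ((N:ℝ) + 1)⁻¹ := by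
        intro i
        rw [← hεp]
        refine Real.rpow_le_rpow (abs_nonneg _) ?_ hp.le
        calc |x i| = ‖x i‖ := (Real.norm_eq_abs _).symm
          _ ≤ ‖x‖ := norm_le_pi_norm x i
          _ ≤ ε := hx.le
      calc Phi p x ≤ ∑ _i : Fin N, ((N:ℝ) + 1)⁻¹ :=
            Finset.sum_le_sum fun i _ => this i
        _ = (N : ℝ) * ((N:ℝ) + 1)⁻¹ := by simp [mul_comm]
        _ ≤ 1 := by
            rw [mul_inv_le_iff₀ (by positivity), one_mul]
            linarith
    have hopen : IsOpen (⇑B '' Metric.ball (0 : Fin N → ℝ) ε) :=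
      LinearMap.isOpenMap_of_finiteDimensional B hBsurj _ Metric.isOpen_ball
    have hne : (⇑B '' Metric.ball (0 : Fin N → ℝ) ε).Nonempty :=
      ⟨B 0, ⟨0, Metric.mem_ball_self hεpos, rfl⟩⟩
    calc (0 : ℝ≥0∞) < μ (⇑B '' Metric.ball (0 : Fin N → ℝ) ε) :=
          hopen.measure_pos μ hne
      _ ≤ μ (K 1) := measure_mono (Set.image_mono hball)
  have hK1top : μ (K 1) < ⊤ := (hKcp 1).measure_lt_top
  -- disjoint translates
  set D : ι → Set (Fin r → ℝ) := fun i => (fun y => B (u i) + y) '' K ρ with hD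
  have hDeq : ∀ i, D i = (fun y => -B (u i) + y) ⁻¹' K ρ := by
    intro i
    rw [hD]
    ext z
    simp only [Set.mem_image, Set.mem_preimage]
    constructor
    · rintro ⟨y, hy, rfl⟩
      simpa using hy
    · intro hz
      exact ⟨-B (u i) + z, hz, by abel⟩
  have hDdisj : (↑F : Set ι).PairwiseDisjoint D := by
    intro i hi j hj hij
    simp only [Function.onFun]
    rw [Set.disjoint_left]
    intro z hzi hzj
    rw [hD] at hzi hzj
    simp only [Set.mem_image] at hzi hzj
    obtain ⟨yi, ⟨ai, hai, rfl⟩, hzi⟩ := hzi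
    obtain ⟨yj, ⟨aj, haj, rfl⟩, hzj⟩ := hzj
    have : B (u i + ai) = B (u j + aj) := by
      rw [map_add, map_add, hzi, hzj]
    exact hsep i hi j hj hij ai aj hai haj this
  have hDmeas : ∀ i ∈ F, MeasurableSet (D i) := by
    intro i _
    rw [hDeq]
    exact (hKcp ρ).measurableSet.preimage (measurable_const_add _)
  have hDμ : ∀ i, μ (D i) = μ (K ρ) := by
    intro i
    rw [hDeq, hμ]
    exact measure_preimage_add volume _ _
  have hDsub : ∀ i ∈ F, D i ⊆ K (R + ρ) := by
    intro i hi z hz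
    rw [hD] at hz
    obtain ⟨y, ⟨a, ha, rfl⟩, rfl⟩ := hz
    refine ⟨u i + a, ?_, map_add B _ _⟩
    rw [hQ]; simp only [Set.mem_setOf_eq]
    calc Phi p (u i + a) ≤ Phi p (u i) + Phi p a := hadd _ _
      _ ≤ R + ρ := add_le_add (hu i hi) ha
  -- counting
  have hcount : (F.card : ℝ≥0∞) * μ (K ρ) ≤ μ (K (R + ρ)) := by
    calc (F.card : ℝ≥0∞) * μ (K ρ) = ∑ i ∈ F, μ (D i) := by
          rw [Finset.sum_congr rfl fun i _ => hDμ i, Finset.sum_const, nsmul_eq_mul]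
      _ = μ (⋃ i ∈ F, D i) := (measure_biUnion_finset hDdisj hDmeas).symm
      _ ≤ μ (K (R + ρ)) := measure_mono (Set.iUnion₂_subset hDsub)
  -- extract real inequality
  have hRρ : (0:ℝ) < R + ρ := by linarith
  rw [hμK ρ hρ, hμK (R + ρ) hRρ] at hcount
  have hcancel : (F.card : ℝ≥0∞) * ENNReal.ofReal ((ρ ^ (1/p)) ^ (r:ℕ))
      ≤ ENNReal.ofReal (((R + ρ) ^ (1/p)) ^ (r:ℕ)) := by
    have h := hcount
    rw [← mul_assoc] at h
    exact (ENNReal.mul_le_mul_iff_left (ne_of_gt hK1pos) (ne_of_lt hK1top)).1 h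
  have hreal : (F.card : ℝ) * (ρ ^ (1/p)) ^ (r:ℕ) ≤ ((R + ρ) ^ (1/p)) ^ (r:ℕ) := by
    have h1 : ((F.card : ℝ≥0∞)) = ENNReal.ofReal (F.card : ℝ) := by
      rw [ENNReal.ofReal_natCast]
    rw [h1, ← ENNReal.ofReal_mul (by positivity)] at hcancel
    exact (ENNReal.ofReal_le_ofReal_iff (by positivity)).1 hcancel
  have hρr : (0:ℝ) < (ρ ^ (1/p)) ^ (r:ℕ) := by positivity
  have hstep : (F.card : ℝ) ≤ ((R + ρ) ^ (1/p)) ^ (r:ℕ) / (ρ ^ (1/p)) ^ (r:ℕ) := by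
    rw [le_div_iff₀ hρr]
    exact hreal
  refine hstep.trans_eq ?_
  rw [← div_pow, ← Real.div_rpow (by positivity) hρ.le]
  rw [← Real.rpow_natCast (((R + ρ) / ρ) ^ (1/p)) r, ← Real.rpow_mul (by positivity)]
  congr 1
  field_simp

end Volume

lemma exists_B {N m : ℕ} (A : Matrix (Fin m) (Fin N) ℝ) :
    ∃ (r : ℕ) (B : (Fin N → ℝ) →ₗ[ℝ] (Fin r → ℝ)), r ≤ m ∧ Function.Surjective B ∧
      ∀ x y : Fin N → ℝ, B x = B y ↔ Matrix.mulVec A x = Matrix.mulVec A y := by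
  classical
  set L : (Fin N → ℝ) →ₗ[ℝ] (Fin m → ℝ) := Matrix.mulVecLin A with hL
  set r : ℕ := Module.finrank ℝ (LinearMap.range L) with hr
  have hrm : r ≤ m := by
    have h1 := Submodule.finrank_le (LinearMap.range L)
    rwa [Module.finrank_fin_fun] at h1
  have hcond : Module.finrank ℝ (LinearMap.range L) = Module.finrank ℝ (Fin r → ℝ) := by
    rw [Module.finrank_fin_fun, hr]
  set e : (LinearMap.range L) ≃ₗ[ℝ] (Fin r → ℝ) := LinearEquiv.ofFinrankEq _ _ hcond with he
  refine ⟨r, e.toLinearMap ∘ₗ L.rangeRestrict, hrm, ?_, ?_⟩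
  · exact e.surjective.comp (LinearMap.surjective_rangeRestrict L)
  · intro x y
    constructor
    · intro h
      have h2 : L.rangeRestrict x = L.rangeRestrict y := e.injective h
      have h3 : (L.rangeRestrict x : Fin m → ℝ) = (L.rangeRestrict y : Fin m → ℝ) :=
        congrArg Subtype.val h2
      simpa [hL, Matrix.mulVecLin_apply] using h3
    · intro h
      have h2 : L x = L y := by simpa [hL, Matrix.mulVecLin_apply] using h
      simp only [LinearMap.comp_apply]
      congr 1
      exact Subtype.ext h2

/-- If a pair `(A, Δ)` is `ℓ_p`-stable in the sense that
`‖x - Δ(Ax)‖_p^p ≤ C σ_s(x)_p^p` for all `x`, then `m ≥ C' p s ln(eN/s)`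
for a constant `C' > 0` depending only on `C`. -/
theorem stable_recovery_lower_bound (C : ℝ) (hC : 0 < C) :
    ∃ C' : ℝ, 0 < C' ∧ ∀ p : ℝ, 0 < p → p ≤ 1 →
      ∀ N m s : ℕ, m < N → s < N →
        ∀ (A : Matrix (Fin m) (Fin N) ℝ) (Δ : (Fin m → ℝ) → (Fin N → ℝ)),
          (∀ x : Fin N → ℝ,
            pnorm p (x - Δ (Matrix.mulVec A x)) ^ p ≤ C * bestApprox s p x ^ p) →
          C' * p * s * Real.log (Real.exp 1 * N / s) ≤ m := by
  classical
  set L₂ : ℝ := Real.log (3 * C + 4) with hL₂def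
  have hL₂ : 1 < L₂ := by
    rw [hL₂def, ← Real.log_exp 1]
    apply Real.log_lt_log (Real.exp_pos 1)
    have := Real.exp_one_lt_d9
    linarith
  have hL₂pos : 0 < L₂ := by linarith
  refine ⟨1 / (20 * L₂), by positivity, ?_⟩
  intro p hp hp1 N m s hmN hsN A Δ hyp
  rcases Nat.eq_zero_or_pos s with hs0 | hs
  · subst hs0
    simp only [Nat.cast_zero, mul_zero, zero_mul]
    positivity
  have hsm : s ≤ m := s_le_m hp hC hsN hyp
  have hspos : (0:ℝ) < s := by exact_mod_cast hs
  have hNpos : (0:ℝ) < N := by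
    have : 0 < N := by omega
    exact_mod_cast this
  by_cases hcase : (N : ℝ) ≤ Real.exp 9 * s
  · -- small N regime: use m ≥ s
    have hlog10 : Real.log (Real.exp 1 * N / s) ≤ 10 := by
      have h1 : Real.exp 1 * N / s ≤ Real.exp 10 := by
        rw [div_le_iff₀ hspos]
        calc Real.exp 1 * (N:ℝ) ≤ Real.exp 1 * (Real.exp 9 * s) := by
              apply mul_le_mul_of_nonneg_left hcase (Real.exp_pos 1).le
          _ = Real.exp 10 * s := by rw [← mul_assoc, ← Real.exp_add]; norm_num
      calc Real.log (Real.exp 1 * N / s) ≤ Real.log (Real.exp 10) :=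
            Real.log_le_log (by positivity) h1
        _ = 10 := Real.log_exp 10
    have hnn : 0 ≤ 1 / (20 * L₂) * p * s := by positivity
    calc 1 / (20 * L₂) * p * s * Real.log (Real.exp 1 * N / s)
        ≤ 1 / (20 * L₂) * p * s * 10 := mul_le_mul_of_nonneg_left hlog10 hnn
      _ ≤ 1 / (20 * 1) * 1 * s * 10 := by
          apply mul_le_mul_of_nonneg_right _ (by norm_num : (0:ℝ) ≤ 10)
          have h1 : 1 / (20 * L₂) ≤ 1 / (20 * 1) := by
            apply one_div_le_one_div_of_le (by norm_num)
            linarith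
          calc 1 / (20 * L₂) * p * s ≤ 1 / (20 * L₂) * 1 * s := by
                apply mul_le_mul_of_nonneg_right _ hspos.le
                exact mul_le_mul_of_nonneg_left hp1 (by positivity)
            _ ≤ 1 / (20 * 1) * 1 * s := by
                apply mul_le_mul_of_nonneg_right _ hspos.le
                rw [mul_one, mul_one]
                exact h1
      _ = s / 2 := by ring
      _ ≤ (m : ℝ) := by
          have : (s:ℝ) ≤ m := by exact_mod_cast hsm
          linarith
  · -- large N regime : packing + volume
    push_neg at hcase
    set k : ℕ := (s + 1) / 2 with hkdef
    obtain ⟨F, hFcard, hFint, hFlow⟩ := packing_strong hs hsN.le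
    obtain ⟨r, B, hrm, hBsurj, hBiff⟩ := exists_B A
    set ρ : ℝ := s / (3 * (C + 1)) with hρdef
    have hρpos : 0 < ρ := by rw [hρdef]; positivity
    have hsepB : ∀ T ∈ F, ∀ T' ∈ F, T ≠ T' → ∀ a b : Fin N → ℝ,
        Phi p a ≤ ρ → Phi p b ≤ ρ → B (indVec T + a) ≠ B (indVec T' + b) := by
      intro T hT T' hT' hne a b ha hb heq
      have h2 : Matrix.mulVec A (indVec T + a) = Matrix.mulVec A (indVec T' + b) :=
        (hBiff _ _).1 heq
      exact separation hp hp1 hC hyp (hFcard T hT) (hFcard T' hT')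
        (hFint T hT T' hT' hne) a b ha hb h2
    have hvol : (F.card : ℝ) ≤ (((s:ℝ) + ρ) / ρ) ^ ((r : ℝ) / p) :=
      card_le_of_separated hp B hBsurj F (fun T => indVec T) hspos.le hρpos
        (fun T hT => by rw [phi_indVec hp, hFcard T hT])
        (fun x y => phi_add_le hp hp1 x y) hsepB
    have hratio : ((s:ℝ) + ρ) / ρ = 3 * C + 4 := by
      rw [hρdef]
      have hC1 : C + 1 ≠ 0 := by positivity
      field_simp
      ring
    have hbase1 : (1:ℝ) ≤ 3 * C + 4 := by linarith
    have hvol2 : (F.card : ℝ) ≤ (3 * C + 4) ^ ((m : ℝ) / p) := by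
      rw [hratio] at hvol
      refine hvol.trans (Real.rpow_le_rpow_of_exponent_le hbase1 ?_)
      gcongr
    -- logs
    have hNs : Real.exp 9 < (N:ℝ) / s := by
      rw [lt_div_iff₀ hspos]
      linarith
    have hN4s : (1:ℝ) < (N:ℝ) / (4 * s) := by
      have h9 : (10:ℝ) ≤ Real.exp 9 := by
        have := Real.add_one_le_exp (9:ℝ)
        linarith
      rw [lt_div_iff₀ (by positivity)]
      nlinarith
    set t : ℝ := Real.log ((N:ℝ) / s) with htdef
    have ht9 : 9 ≤ t := by
      rw [htdef, ← Real.log_exp 9]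
      exact (Real.log_le_log (Real.exp_pos 9) hNs.le)
    have hlog4 : Real.log 4 ≤ 1.4 := by
      have h2 : Real.log 2 < 0.6931471808 := Real.log_two_lt_d9
      have : Real.log 4 = 2 * Real.log 2 := by
        rw [show (4:ℝ) = 2 ^ 2 by norm_num, Real.log_pow]
        push_cast; ring
      linarith
    have hlogN4s : Real.log ((N:ℝ) / (4 * s)) = t - Real.log 4 := by
      have hndiv : (N:ℝ) / (4 * s) = ((N:ℝ) / s) / 4 := by
        rw [div_div, mul_comm]
      rw [hndiv, Real.log_div (by positivity) (by norm_num), htdef]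
    have hklog : (k:ℝ) * (t - Real.log 4) ≤ ((m:ℝ)/p) * L₂ := by
      have hchain : ((N:ℝ)/(4*s)) ^ k ≤ (3 * C + 4) ^ ((m : ℝ) / p) :=
        hFlow.trans hvol2
      have hlhs : (0:ℝ) < ((N:ℝ)/(4*s)) ^ k := by positivity
      have h := Real.log_le_log hlhs hchain
      rw [Real.log_pow, Real.log_rpow (by linarith : (0:ℝ) < 3 * C + 4), hlogN4s] at h
      rw [hL₂def]
      exact h
    have hsk : (s:ℝ) ≤ 2 * (k:ℝ) := by
      have : s ≤ 2 * k := by omega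
      exact_mod_cast this
    have hg : 0 ≤ t - Real.log 4 := by linarith
    have hlogeNs : Real.log (Real.exp 1 * N / s) = 1 + t := by
      rw [mul_div_assoc, Real.log_mul (Real.exp_ne_zero 1) (by positivity), Real.log_exp,
        htdef]
    have key : p * (k:ℝ) * (t - Real.log 4) ≤ (m:ℝ) * L₂ := by
      have h := mul_le_mul_of_nonneg_left hklog hp.le
      have hr : p * (((m:ℝ)/p) * L₂) = (m:ℝ) * L₂ := by
        field_simp
      calc p * (k:ℝ) * (t - Real.log 4) = p * ((k:ℝ) * (t - Real.log 4)) := by ring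
        _ ≤ p * (((m:ℝ)/p) * L₂) := h
        _ = (m:ℝ) * L₂ := hr
    have h10 : 1 + t ≤ 10 * (t - Real.log 4) := by linarith
    rw [hlogeNs]
    have hgoal : 1/(20*L₂) * p * (s:ℝ) * (1+t) = (p * s * (1+t))/(20*L₂) := by ring
    rw [hgoal, div_le_iff₀ (by positivity : (0:ℝ) < 20*L₂)]
    calc p * (s:ℝ) * (1 + t) ≤ p * s * (10 * (t - Real.log 4)) := by
          apply mul_le_mul_of_nonneg_left h10 (by positivity)
      _ = 10 * ((t - Real.log 4) * (p * (s:ℝ))) := by ring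
      _ ≤ 10 * ((t - Real.log 4) * (p * (2*(k:ℝ)))) := by
          apply mul_le_mul_of_nonneg_left _ (by norm_num : (0:ℝ) ≤ 10)
          apply mul_le_mul_of_nonneg_left _ hg
          exact mul_le_mul_of_nonneg_left hsk hp.le
      _ = 20 * (p * (k:ℝ) * (t - Real.log 4)) := by ring
      _ ≤ 20 * ((m:ℝ) * L₂) := by
          apply mul_le_mul_of_nonneg_left key (by norm_num : (0:ℝ) ≤ 20)
      _ = (m:ℝ) * (20 * L₂) := by ring
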